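/- Let H ≥ 1 and define α_t = (H+1)/(H+t) and α_t^j = α_j ∏_{k=j+1}^{t}(1-α_k) for 1 ≤ j ≤ t. Then for all t ≥ 1 and 1 ≤ j ≤ t, it holds that α_t^j ≤ α_t and α_{t+1}^j ≤ α_t^j. -/

import Mathlib

theorem weights_monotonicity
    (H : ℝ) (hH : 1 ≤ H)
    (α : ℕ → ℝ) (hα : ∀ t, α t = (H + 1) / (H + t))
    (αj : ℕ → ℕ → ℝ)
    (hαj : ∀ j t, αj j t = α j * ∏ k ∈ Finset.Icc (j + 1) t, (1 - α k))
    (t : ℕ) (ht : 1 ≤ t) (j : ℕ) (hj1 : 1 ≤ j) (hjt : j ≤ t) :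
    αj j t ≤ α t ∧ αj j (t + 1) ≤ αj j t := by
  have hH0 : (0:ℝ) < H := lt_of_lt_of_le one_pos hH
  have hden : ∀ k : ℕ, (0:ℝ) < H + k := by
    intro k
    have : (0:ℝ) ≤ (k:ℝ) := Nat.cast_nonneg k
    linarith
  have hpos : ∀ k : ℕ, 0 < α k := by
    intro k
    rw [hα]
    exact div_pos (by linarith) (hden k)
  have hle1 : ∀ k : ℕ, 1 ≤ k → α k ≤ 1 := by
    intro k hk
    rw [hα]
    apply div_le_one_of_le₀ _ (le_of_lt (hden k))
    have : (1:ℝ) ≤ (k:ℝ) := by exact_mod_cast hk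
    linarith
  have hnn : ∀ k : ℕ, 1 ≤ k → 0 ≤ 1 - α k := by
    intro k hk; linarith [hle1 k hk]
  -- nonnegativity of αj
  have hαjnn : ∀ s : ℕ, 0 ≤ αj j s := by
    intro s
    rw [hαj]
    apply mul_nonneg (le_of_lt (hpos j))
    apply Finset.prod_nonneg
    intro k hk
    have hk1 : 1 ≤ k := le_trans (le_trans hj1 (Nat.le_succ j)) (Finset.mem_Icc.mp hk).1
    exact hnn k hk1
  -- key step inequality
  have hstep : ∀ n : ℕ, 1 ≤ n → α n * (1 - α (n + 1)) ≤ α (n + 1) := by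
    intro n hn
    have hn1 : (1:ℝ) ≤ (n:ℝ) := by exact_mod_cast hn
    rw [hα n, hα (n + 1)]
    push_cast
    have h1 : (0:ℝ) < H + n := by linarith
    have h2 : (0:ℝ) < H + (n + 1) := by linarith
    rw [div_mul_eq_mul_div, div_le_div_iff₀ h1 h2]
    have : 1 - (H + 1) / (H + (n + 1)) = n / (H + (n + 1)) := by
      field_simp
      ring
    rw [this]
    have h3 : (H + 1) * ((n:ℝ) / (H + ((n:ℝ) + 1))) * (H + ((n:ℝ) + 1)) = (H + 1) * n := by
      field_simp
    rw [h3]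
    nlinarith
  -- first part by induction
  have hmain : ∀ s : ℕ, j ≤ s → αj j s ≤ α s := by
    intro s hs
    induction s, hs using Nat.le_induction with
    | base =>
      rw [hαj, Finset.Icc_eq_empty (by omega), Finset.prod_empty, mul_one]
    | succ n hn ih =>
      have hprod : αj j (n + 1) = αj j n * (1 - α (n + 1)) := by
        rw [hαj, hαj, Finset.prod_Icc_succ_top (by omega), mul_assoc]
      rw [hprod]
      calc αj j n * (1 - α (n + 1)) ≤ α n * (1 - α (n + 1)) := by
            apply mul_le_mul_of_nonneg_right ih (hnn (n + 1) (by omega))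
        _ ≤ α (n + 1) := hstep n (le_trans hj1 hn)
  constructor
  · exact hmain t hjt
  · have hprod : αj j (t + 1) = αj j t * (1 - α (t + 1)) := by
      rw [hαj, hαj, Finset.prod_Icc_succ_top (by omega), mul_assoc]
    rw [hprod]
    calc αj j t * (1 - α (t + 1)) ≤ αj j t * 1 := by
          apply mul_le_mul_of_nonneg_left _ (hαjnn t)
          linarith [hpos (t + 1)]
      _ = αj j t := mul_one _
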